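/- Under hypotheses (H1)–(H4), with d = |K ∩ H⁺|^{1/n} − ((n/(n+1))ⁿ)^{1/n}, one has ∫_{a'}^{b'} x·c(x)^{n−1} dx = (b' − a')·d. -/

import Mathlib

open MeasureTheory Set

private lemma integral_x_mul_pow_aux (m : ℕ) (p q : ℝ) :
    (∫ x in q..p, x * (p - x) ^ m)
      = p * (p - q) ^ (m + 1) / (m + 1) - (p - q) ^ (m + 2) / (m + 2) := by
  have h := intervalIntegral.integral_comp_sub_left (a := q) (b := p)
    (fun t => (p - t) * t ^ m) p
  simp only [sub_sub_cancel, sub_self] at h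
  rw [h]
  have h2 : (∫ t in (0:ℝ)..(p - q), (p - t) * t ^ m)
      = ∫ t in (0:ℝ)..(p - q), (p * t ^ m - t ^ (m + 1)) := by
    congr 1; funext t; ring
  rw [h2, intervalIntegral.integral_sub
      ((intervalIntegral.intervalIntegrable_pow m).const_mul p)
      (intervalIntegral.intervalIntegrable_pow (m+1)),
      intervalIntegral.integral_const_mul, integral_pow, integral_pow]
  push_cast
  ring

theorem integral_x_c_pow (n : ℕ) (hn : 2 ≤ n)
    (K : Set (ℝ × EuclideanSpace ℝ (Fin (n - 1))))
    (hKcomp : IsCompact K) (hKconv : Convex ℝ K)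
    -- (H1): the centroid of K is the origin
    (hH1 : (∫ p in K, p) = 0)
    -- (H3): max_x |K_x| = 1
    (hH3le : ∀ x : ℝ, volume {y : EuclideanSpace ℝ (Fin (n - 1)) | (x, y) ∈ K} ≤ 1)
    (hH3eq : ∃ x : ℝ, volume {y : EuclideanSpace ℝ (Fin (n - 1)) | (x, y) ∈ K} = 1)
    -- (H4): |K| = 1
    (hH4 : volume K = 1)
    (a b : ℝ)
    (ha : IsLeast (Prod.fst '' K) a) (hb : IsGreatest (Prod.fst '' K) b)
    (g : ℝ → ℝ)
    (hg : ∀ x, g x = (volume {y : EuclideanSpace ℝ (Fin (n - 1)) | (x, y) ∈ K}).toReal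
              ^ (((n:ℝ) - 1)⁻¹))
    (a' b' : ℝ)
    (hb' : b' = ((n:ℝ) / (volume {y : EuclideanSpace ℝ (Fin (n - 1)) | ((0:ℝ), y) ∈ K}).toReal)
            * (volume (K ∩ {p : ℝ × EuclideanSpace ℝ (Fin (n - 1)) | 0 ≤ p.1})).toReal)
    (ha' : a' = b' - (((n:ℝ) * b' ^ (n - 1))
            / (volume {y : EuclideanSpace ℝ (Fin (n - 1)) | ((0:ℝ), y) ∈ K}).toReal)
              ^ ((n:ℝ)⁻¹))
    (d : ℝ)
    (hd : d = (volume (K ∩ {p : ℝ × EuclideanSpace ℝ (Fin (n - 1)) | 0 ≤ p.1})).toReal ^ ((n:ℝ)⁻¹)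
            - (((n:ℝ) / (n + 1)) ^ n) ^ ((n:ℝ)⁻¹))
    (c : ℝ → ℝ)
    (hc : ∀ x ∈ Icc a' b', c x = g 0 * (b' - x) / b') :
    (∫ x in a'..b', x * c x ^ (n - 1)) = (b' - a') * d := by
  set v0 : ℝ := (volume {y : EuclideanSpace ℝ (Fin (n - 1)) | ((0:ℝ), y) ∈ K}).toReal with hv0
  set V : ℝ := (volume (K ∩ {p : ℝ × EuclideanSpace ℝ (Fin (n - 1)) | 0 ≤ p.1})).toReal with hV
  have hv0nn : 0 ≤ v0 := ENNReal.toReal_nonneg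
  have hVnn : 0 ≤ V := ENNReal.toReal_nonneg
  have hnpos : (0:ℝ) < n := by positivity
  have hn1 : n - 1 ≠ 0 := by omega
  have hninv : ((n:ℝ))⁻¹ ≠ 0 := by positivity
  by_cases hb0 : b' = 0
  · have ha0 : a' = 0 := by
      rw [ha', hb0]
      rw [zero_pow hn1]
      simp [Real.zero_rpow hninv]
    rw [ha0, hb0, intervalIntegral.integral_same]
    ring
  · -- nondegenerate case
    have hv0pos : 0 < v0 := by
      rcases hv0nn.lt_or_eq with h | h
      · exact h
      · exact absurd (by rw [hb', ← h, div_zero, zero_mul]) hb0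
    have hVpos : 0 < V := by
      rcases hVnn.lt_or_eq with h | h
      · exact h
      · exact absurd (by rw [hb', ← h, mul_zero]) hb0
    have hb'pos : 0 < b' := by
      rw [hb']; positivity
    set L : ℝ := (((n:ℝ) * b' ^ (n - 1)) / v0) ^ ((n:ℝ)⁻¹) with hL
    have hLnn : 0 ≤ L := Real.rpow_nonneg (by positivity) _
    have haL : a' = b' - L := ha'
    have hab : a' ≤ b' := by rw [haL]; linarith
    have hLn : L ^ n = ((n:ℝ) * b' ^ (n - 1)) / v0 := by
      rw [hL]
      exact Real.rpow_inv_natCast_pow (by positivity) (by omega)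
    -- g 0 to the (n-1) equals v0
    set G : ℝ := g 0 with hG
    have hGnn : 0 ≤ G := by rw [hG, hg]; exact Real.rpow_nonneg ENNReal.toReal_nonneg _
    have hGpow : G ^ (n - 1) = v0 := by
      rw [hG, hg]
      have hcast : ((n:ℝ) - 1) = ((n - 1 : ℕ) : ℝ) := by
        push_cast [Nat.cast_sub (by omega : 1 ≤ n)]; ring
      rw [hcast]
      exact Real.rpow_inv_natCast_pow hv0nn hn1
    -- rewrite the integrand
    have hcongr : (∫ x in a'..b', x * c x ^ (n - 1))
        = ∫ x in a'..b', (G / b') ^ (n - 1) * (x * (b' - x) ^ (n - 1)) := by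
      apply intervalIntegral.integral_congr
      intro x hx
      rw [uIcc_of_le hab] at hx
      show x * c x ^ (n - 1) = (G / b') ^ (n - 1) * (x * (b' - x) ^ (n - 1))
      rw [hc x hx]
      rw [div_pow, mul_pow]
      field_simp
      have hbb : b' ^ (n - 1) * b'⁻¹ ^ (n - 1) = 1 := by
        rw [← mul_pow, mul_inv_cancel₀ hb0, one_pow]
      linear_combination (-(x * G ^ (n - 1) * (-x + b') ^ (n - 1))) * hbb
    rw [hcongr, intervalIntegral.integral_const_mul, integral_x_mul_pow_aux]
    have hm1 : n - 1 + 1 = n := by omega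
    have hm2 : n - 1 + 2 = n + 1 := by omega
    have hsub : b' - a' = L := by rw [haL]; ring
    have hc1 : ((n - 1 : ℕ) : ℝ) + 1 = (n : ℝ) := by
      push_cast [Nat.cast_sub (show 1 ≤ n by omega)]; ring
    have hc2 : ((n - 1 : ℕ) : ℝ) + 2 = (n : ℝ) + 1 := by
      push_cast [Nat.cast_sub (show 1 ≤ n by omega)]; ring
    rw [hm1, hm2, hsub, hc1, hc2]
    -- key identity: L * V^(1/n) = b'
    have hLV : L * V ^ ((n:ℝ)⁻¹) = b' := by
      rw [hL, ← Real.mul_rpow (by positivity) hVnn]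
      have : (n:ℝ) * b' ^ (n - 1) / v0 * V = b' ^ n := by
        have hb'eq : b' = (n:ℝ) / v0 * V := hb'
        have hpow : b' ^ n = b' ^ (n - 1) * b' := by
          rw [← pow_succ, hm1]
        rw [hpow, hb'eq]
        field_simp
      rw [this]
      exact Real.pow_rpow_inv_natCast hb'pos.le (by omega)
    have hdval : d = V ^ ((n:ℝ)⁻¹) - (n:ℝ) / (n + 1) := by
      rw [hd]
      congr 1
      exact Real.pow_rpow_inv_natCast (by positivity) (by omega)
    rw [hdval]
    have hLn' : L ^ (n + 1) = L * ((n:ℝ) * b' ^ (n - 1) / v0) := by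
      rw [pow_succ, hLn]; ring
    rw [div_pow, hGpow, hLn, hLn']
    rw [show L * (V ^ ((n:ℝ)⁻¹) - (n:ℝ) / ((n:ℝ) + 1)) = b' - L * (n:ℝ) / ((n:ℝ) + 1) from by
      rw [mul_sub, hLV]; ring]
    have hbne : b' ^ (n - 1) ≠ 0 := by positivity
    have hnne : (n:ℝ) ≠ 0 := by positivity
    have hn1ne : (n:ℝ) + 1 ≠ 0 := by positivity
    have hv0ne : v0 ≠ 0 := hv0pos.ne'
    field_simp
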